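/- Let K be a compact Hausdorff space, u ∈ C(K) a nonzero continuous real-valued function, E a topological space, and e : E × K → {0,1} a separately continuous function that is nonconstant on every nonempty open rectangle of E × K. Then the map t ↦ u · e(t, ·) from E to C(K) with the supremum norm has no points of continuity. -/

import Mathlib

private lemma zo_eq_of_close (a b : ℝ) (ha : a = 0 ∨ a = 1) (hb : b = 0 ∨ b = 1)
    (h : |a - b| < 1/2) : a = b := by
  rcases ha with h'|h' <;> rcases hb with h''|h'' <;> subst h' <;> subst h'' <;>
    revert h <;> norm_num

theorem multiplication_composed_with_evaluation_nowhere_norm_continuous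
    {K : Type*} [TopologicalSpace K] [CompactSpace K] [T2Space K]
    {E : Type*} [TopologicalSpace E]
    (u : C(K, ℝ)) (hu : u ≠ 0)
    (e : E × K → ℝ)
    (hval : ∀ p : E × K, e p = 0 ∨ e p = 1)
    (hsep1 : ∀ t : E, Continuous fun x : K => e (t, x))
    (hsep2 : ∀ x : K, Continuous fun t : E => e (t, x))
    (hnc : ∀ U : Set E, ∀ W : Set K, IsOpen U → IsOpen W → U.Nonempty → W.Nonempty →
      ∃ p ∈ U ×ˢ W, ∃ q ∈ U ×ˢ W, e p ≠ e q) :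
    ∀ t₀ : E, ¬ ContinuousAt
      (fun t : E => (ContinuousMap.mk (fun x : K => u x * e (t, x))
        (u.continuous.mul (hsep1 t)) : C(K, ℝ))) t₀ := by
  obtain ⟨x₀, hx₀⟩ : ∃ x, u x ≠ 0 := by
    by_contra h
    push_neg at h
    exact hu (ContinuousMap.ext fun x => h x)
  set δ := |u x₀| with hδdef
  have hδ : 0 < δ := abs_pos.mpr hx₀
  intro t₀ hcont
  set F : E → C(K, ℝ) := fun t => ContinuousMap.mk (fun x => u x * e (t, x))
    (u.continuous.mul (hsep1 t)) with hF
  have hball : F ⁻¹' Metric.ball (F t₀) (δ/4) ∈ nhds t₀ :=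
    hcont (Metric.ball_mem_nhds _ (by positivity))
  obtain ⟨U, hUsub, hUopen, ht₀U⟩ := mem_nhds_iff.mp hball
  set c := e (t₀, x₀) with hc
  set W : Set K := {x | δ/2 < |u x|} ∩ {x | |e (t₀, x) - c| < 1/2} with hW
  have hWopen : IsOpen W := by
    apply IsOpen.inter
    · exact isOpen_lt continuous_const (continuous_abs.comp u.continuous)
    · exact isOpen_lt (Continuous.abs ((hsep1 t₀).sub continuous_const)) continuous_const
  have hWne : W.Nonempty := ⟨x₀, by
    constructor
    · simpa using by linarith
    · simp [hc]⟩
  have key : ∀ p ∈ U ×ˢ W, e p = c := by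
    rintro ⟨t, x⟩ ⟨htU, hxW⟩
    have hd : dist (F t) (F t₀) < δ/4 := hUsub htU
    have h1 : |u x * e (t, x) - u x * e (t₀, x)| < δ/4 := by
      calc |u x * e (t, x) - u x * e (t₀, x)| = dist (F t x) (F t₀ x) := by
            simp [hF, Real.dist_eq]
        _ ≤ dist (F t) (F t₀) := ContinuousMap.dist_apply_le_dist x
        _ < δ/4 := hd
    have hux : δ/2 < |u x| := hxW.1
    have h2 : |e (t, x) - e (t₀, x)| < 1/2 := by
      by_contra h
      push_neg at h
      rw [← mul_sub, abs_mul] at h1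
      nlinarith [abs_nonneg (e (t, x) - e (t₀, x))]
    have e1 : e (t, x) = e (t₀, x) := zo_eq_of_close _ _ (hval _) (hval _) h2
    have e2 : e (t₀, x) = c := zo_eq_of_close _ _ (hval _) (hval _) hxW.2
    exact e1.trans e2
  obtain ⟨p, hp, q, hq, hpq⟩ := hnc U W hUopen hWopen ⟨t₀, ht₀U⟩ hWne
  exact hpq ((key p hp).trans (key q hq).symm)
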